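/- For the logistic sigmoid f(x) = e^x/(1+e^x) and any reals a, b, one has the mean value type bound |f'(a) - f'(b)| ≤ |a - b| · max{f'(a), f'(b)}. -/

import Mathlib

noncomputable def logisticF : ℝ → ℝ := fun x => Real.exp x / (1 + Real.exp x)

lemma deriv_logisticF (x : ℝ) :
    deriv logisticF x = Real.exp x / (1 + Real.exp x)^2 := by
  have hne : (1 + Real.exp x) ≠ 0 := by positivity
  have h : HasDerivAt logisticF (Real.exp x / (1 + Real.exp x)^2) x := by
    have h1 : HasDerivAt (fun y => Real.exp y) (Real.exp x) x := Real.hasDerivAt_exp x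
    have h2 : HasDerivAt (fun y => 1 + Real.exp y) (Real.exp x) x := by
      exact h1.const_add 1
    have := h1.div h2 hne
    refine HasDerivAt.congr_deriv this ?_
    congr 1
    ring
  exact h.deriv

-- key: g a ≤ g b * exp |a - b|
lemma key (a b : ℝ) :
    Real.exp a / (1 + Real.exp a)^2
      ≤ Real.exp b / (1 + Real.exp b)^2 * Real.exp |a - b| := by
  have ha := Real.exp_pos a
  have hb := Real.exp_pos b
  have hpa : (0:ℝ) < (1 + Real.exp a)^2 := by positivity
  have hpb : (0:ℝ) < (1 + Real.exp b)^2 := by positivity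
  rw [div_le_iff₀ hpa, div_mul_eq_mul_div, div_mul_eq_mul_div, le_div_iff₀ hpb]
  rcases le_total b a with h | h
  · have habs : |a - b| = a - b := abs_of_nonneg (by linarith)
    have hexp : Real.exp b * Real.exp (a - b) = Real.exp a := by
      rw [← Real.exp_add]; ring_nf
    have hle : Real.exp b ≤ Real.exp a := Real.exp_le_exp.2 h
    rw [habs, hexp]
    have hsq : (1 + Real.exp b)^2 ≤ (1 + Real.exp a)^2 := by nlinarith
    nlinarith
  · have habs : |a - b| = b - a := by rw [abs_of_nonpos (by linarith : a - b ≤ 0)]; ring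
    have hexp : Real.exp b * Real.exp (b - a) = Real.exp b ^ 2 / Real.exp a := by
      rw [← Real.exp_add]
      rw [eq_div_iff (ne_of_gt ha), ← Real.exp_add, sq, ← Real.exp_add]
      ring_nf
    have hle : Real.exp a ≤ Real.exp b := Real.exp_le_exp.2 h
    rw [habs, hexp]
    rw [div_mul_eq_mul_div, le_div_iff₀ ha]
    nlinarith [sq_nonneg (Real.exp a * (1 + Real.exp b) - Real.exp b * (1 + Real.exp a)), mul_pos ha hb]

lemma half (a b : ℝ) :
    Real.exp a / (1 + Real.exp a)^2 - Real.exp b / (1 + Real.exp b)^2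
      ≤ |a - b| * (Real.exp a / (1 + Real.exp a)^2) := by
  set t := |a - b| with ht
  have htnn : 0 ≤ t := abs_nonneg _
  have ga : (0:ℝ) < Real.exp a / (1 + Real.exp a)^2 := by positivity
  have hkey := key a b
  -- g b ≥ g a * exp (-t)
  have hgb : Real.exp a / (1 + Real.exp a)^2 * Real.exp (-t)
      ≤ Real.exp b / (1 + Real.exp b)^2 := by
    have := mul_le_mul_of_nonneg_right hkey (le_of_lt (Real.exp_pos (-t)))
    rw [mul_assoc, ← Real.exp_add] at this
    simpa [ht] using this
  have h1 : 1 - Real.exp (-t) ≤ t := by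
    nlinarith [Real.add_one_le_exp (-t)]
  nlinarith [Real.exp_pos (-t)]

theorem stmt2 (a b : ℝ) :
    |deriv logisticF a - deriv logisticF b|
      ≤ |a - b| * max (deriv logisticF a) (deriv logisticF b) := by
  rw [deriv_logisticF, deriv_logisticF]
  rw [abs_sub_le_iff]
  constructor
  · calc _ ≤ |a - b| * (Real.exp a / (1 + Real.exp a)^2) := half a b
      _ ≤ _ := by
        apply mul_le_mul_of_nonneg_left (le_max_left _ _) (abs_nonneg _)
  · calc _ ≤ |b - a| * (Real.exp b / (1 + Real.exp b)^2) := half b a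
      _ ≤ _ := by
        rw [abs_sub_comm]
        apply mul_le_mul_of_nonneg_left (le_max_right _ _) (abs_nonneg _)
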